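/- (Ping Pong Lemma for amalgamated products) Let a group G act on a set X, let H₁, H₂ ≤ G be subgroups with N = H₁ ∩ H₂, [H₁ : N] ≥ 3 and [H₂ : N] ≥ 2, and let X₁, X₂ ⊆ X be nonempty with X₂ ⊄ X₁, such that h·X₂ ⊆ X₁ for all h ∈ H₁ \ N and h·X₁ ⊆ X₂ for all h ∈ H₂ \ N. Then the canonical homomorphism from the amalgamated free product H₁ *_N H₂ to G (induced by the inclusions) is injective; equivalently, the subgroup generated by H₁ and H₂ is isomorphic to H₁ *_N H₂. -/

import Mathlib

/-- The `Bool`-indexed family `{H₁, H₂}` of subgroups, used to form the amalgamated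
free product `H₁ *_N H₂` as a pushout. -/
def pingFam {G : Type*} [Group G] (H₁ H₂ : Subgroup G) : Bool → Type _ :=
  fun b => bif b then ↥H₁ else ↥H₂

instance {G : Type*} [Group G] (H₁ H₂ : Subgroup G) : ∀ b, Group (pingFam H₁ H₂ b)
  | true => inferInstanceAs (Group ↥H₁)
  | false => inferInstanceAs (Group ↥H₂)

/-- The inclusions of the common subgroup `N` into `H₁` and `H₂`. -/
def pingMaps {G : Type*} [Group G] (H₁ H₂ N : Subgroup G)
    (hle1 : N ≤ H₁) (hle2 : N ≤ H₂) : ∀ b, ↥N →* pingFam H₁ H₂ b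
  | true => Subgroup.inclusion hle1
  | false => Subgroup.inclusion hle2

/-- The inclusions of `H₁` and `H₂` into `G`. -/
def pingSub {G : Type*} [Group G] (H₁ H₂ : Subgroup G) : ∀ b, pingFam H₁ H₂ b →* G
  | true => H₁.subtype
  | false => H₂.subtype



section PP

variable {G X : Type*} [Group G] [MulAction G X]

inductive PPAlt (H₁ H₂ N : Subgroup G) : Bool → Bool → List G → Prop
  | single (b : Bool) (h : G) (hmem : h ∈ (bif b then H₁ else H₂)) (hn : h ∉ N) :
      PPAlt H₁ H₂ N b b [h]
  | cons (b c : Bool) (h : G) (l : List G) (hmem : h ∈ (bif b then H₁ else H₂))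
      (hn : h ∉ N) (tl : PPAlt H₁ H₂ N (!b) c l) : PPAlt H₁ H₂ N b c (h :: l)

variable {H₁ H₂ N : Subgroup G}

lemma PPAlt.append {b c d : Bool} {l₁ l₂ : List G} (w₁ : PPAlt H₁ H₂ N b c l₁)
    (w₂ : PPAlt H₁ H₂ N (!c) d l₂) : PPAlt H₁ H₂ N b d (l₁ ++ l₂) := by
  induction w₁ with
  | single b h hmem hn => exact .cons b d h l₂ hmem hn w₂
  | cons b c h l hmem hn tl ih => exact .cons b d h (l ++ l₂) hmem hn (ih w₂)

lemma PPAlt.reverse_inv {b c : Bool} {l : List G} (w : PPAlt H₁ H₂ N b c l) :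
    PPAlt H₁ H₂ N c b ((l.map (·⁻¹)).reverse) := by
  induction w with
  | single b h hmem hn =>
      exact .single b h⁻¹ (by cases b <;> simpa using inv_mem hmem) (by simpa using hn)
  | cons b c h l hmem hn tl ih =>
      simp only [List.map_cons, List.reverse_cons]
      have hs : PPAlt H₁ H₂ N (!(!b)) b [h⁻¹] := by
        rw [Bool.not_not]
        exact .single b h⁻¹ (by cases b <;> simpa using inv_mem hmem) (by simpa using hn)
      exact ih.append hs

lemma PPAlt.smul_mem {X₁ X₂ : Set X}
    (hp1 : ∀ h ∈ H₁, h ∉ N → ∀ x ∈ X₂, h • x ∈ X₁)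
    (hp2 : ∀ h ∈ H₂, h ∉ N → ∀ x ∈ X₁, h • x ∈ X₂)
    {b c : Bool} {l : List G} (w : PPAlt H₁ H₂ N b c l) :
    ∀ x ∈ (bif c then X₂ else X₁), l.prod • x ∈ (bif b then X₁ else X₂) := by
  induction w with
  | single b h hmem hn =>
      intro x hx
      simp only [List.prod_cons, List.prod_nil, mul_one]
      cases b
      · exact hp2 h hmem hn x hx
      · exact hp1 h hmem hn x hx
  | cons b c h l hmem hn tl ih =>
      intro x hx
      rw [List.prod_cons, mul_smul]
      have hmid := ih x hx
      cases b
      · exact hp2 h hmem hn _ (by simpa using hmid)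
      · exact hp1 h hmem hn _ (by simpa using hmid)

lemma pp_exists_ne_ne {α : Type*} (h : Nat.card α = 0 ∨ 3 ≤ Nat.card α) (x y : α) :
    ∃ z, z ≠ x ∧ z ≠ y := by
  classical
  by_contra hc
  push_neg at hc
  have hinj : Function.Injective (fun z : α => decide (z = x)) := by
    intro a b hab
    by_cases ha : a = x <;> by_cases hb : b = x <;> simp [ha, hb] at hab ⊢
    · exact (hc b hb).symm ▸ (hc a ha)
  have hfin : Finite α := Finite.of_injective _ hinj
  have hne : Nonempty α := ⟨x⟩
  have hle : Nat.card α ≤ 2 := by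
    have := Nat.card_le_card_of_injective _ hinj
    simpa using this
  have hpos : 0 < Nat.card α := Nat.card_pos
  omega

lemma pp_exists_avoid (hidx1 : N.relIndex H₁ = 0 ∨ 3 ≤ N.relIndex H₁)
    (a : G) (ha : a ∈ H₁) : ∃ k ∈ H₁, k ∉ N ∧ k⁻¹ * a ∉ N := by
  have hcard : Nat.card (H₁ ⧸ N.subgroupOf H₁) = 0 ∨
      3 ≤ Nat.card (H₁ ⧸ N.subgroupOf H₁) := by
    rwa [Subgroup.relIndex, Subgroup.index_eq_card] at hidx1
  obtain ⟨z, hz1, hz2⟩ := pp_exists_ne_ne hcard ((1 : H₁) : H₁ ⧸ N.subgroupOf H₁)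
    ((⟨a, ha⟩ : H₁) : H₁ ⧸ N.subgroupOf H₁)
  obtain ⟨k, rfl⟩ := QuotientGroup.mk_surjective z
  refine ⟨(k : G), k.2, ?_, ?_⟩
  · intro hk
    exact hz1 (by
      rw [QuotientGroup.eq]
      simpa [Subgroup.mem_subgroupOf] using inv_mem hk)
  · intro hk
    exact hz2 (by
      rw [QuotientGroup.eq]
      simpa [Subgroup.mem_subgroupOf] using hk)

section NeOne

variable {X₁ X₂ : Set X}
  (hidx1 : N.relIndex H₁ = 0 ∨ 3 ≤ N.relIndex H₁)
  (hns : ¬ X₂ ⊆ X₁)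
  (hp1 : ∀ h ∈ H₁, h ∉ N → ∀ x ∈ X₂, h • x ∈ X₁)
  (hp2 : ∀ h ∈ H₂, h ∉ N → ∀ x ∈ X₁, h • x ∈ X₂)

include hns hp1 hp2 in
lemma pp_tt {l : List G} (w : PPAlt H₁ H₂ N true true l) : l.prod ≠ 1 := by
  obtain ⟨x, hx2, hx1⟩ := Set.not_subset.1 hns
  intro hone
  have := w.smul_mem hp1 hp2 x (by simpa using hx2)
  rw [hone, one_smul] at this
  exact hx1 (by simpa using this)

include hidx1 hns hp1 hp2 in
lemma pp_tf {l : List G} (w : PPAlt H₁ H₂ N true false l) : l.prod ≠ 1 := by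
  cases w with
  | cons _ _ hd t hmem hn htl =>
    obtain ⟨k, hk1, hkN, hka⟩ := pp_exists_avoid hidx1 hd (by simpa using hmem)
    have hw' : PPAlt H₁ H₂ N true true ((k⁻¹ * hd) :: (t ++ [k])) := by
      refine .cons _ _ _ _ ?_ hka ?_
      · exact mul_mem (inv_mem hk1) (by simpa using hmem)
      · exact PPAlt.append (by simpa using htl) (.single true k (by simpa using hk1) hkN)
    intro hone
    apply pp_tt hns hp1 hp2 hw'
    simp only [List.prod_cons, List.prod_append, List.prod_cons, List.prod_nil, mul_one]
    have h2 : hd * t.prod = 1 := by simpa using hone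
    calc k⁻¹ * hd * (t.prod * k) = k⁻¹ * (hd * t.prod) * k := by group
    _ = 1 := by rw [h2]; group

include hidx1 hns hp1 hp2 in
lemma pp_ft {l : List G} (w : PPAlt H₁ H₂ N false true l) : l.prod ≠ 1 := by
  intro hone
  apply pp_tf hidx1 hns hp1 hp2 w.reverse_inv
  rw [← List.prod_inv_reverse]
  simp [hone]

include hidx1 hns hp1 hp2 in
lemma pp_ff {l : List G} (w : PPAlt H₁ H₂ N false false l) : l.prod ≠ 1 := by
  obtain ⟨k, hk1, hkN, -⟩ := pp_exists_avoid hidx1 1 (one_mem _)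
  have hw' : PPAlt H₁ H₂ N true true (k :: (l ++ [k⁻¹])) := by
    refine .cons _ _ _ _ (by simpa using hk1) hkN ?_
    exact PPAlt.append w (by
      rw [show (!false) = true from rfl]
      exact .single true k⁻¹ (by simpa using inv_mem hk1) (by simpa using hkN))
  intro hone
  apply pp_tt hns hp1 hp2 hw'
  simp [List.prod_cons, List.prod_append, hone]

include hidx1 hns hp1 hp2 in
lemma pp_ne_one : ∀ {b c : Bool} {l : List G}, PPAlt H₁ H₂ N b c l → l.prod ≠ 1
  | true, true, _, w => pp_tt hns hp1 hp2 w
  | true, false, _, w => pp_tf hidx1 hns hp1 hp2 w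
  | false, true, _, w => pp_ft hidx1 hns hp1 hp2 w
  | false, false, _, w => pp_ff hidx1 hns hp1 hp2 w

end NeOne

/-- merging an element of N into the head letter. -/
lemma PPAlt.head_mul (hle1 : N ≤ H₁) (hle2 : N ≤ H₂) {n : G} (hn : n ∈ N)
    {b c : Bool} {h : G} {t : List G} (w : PPAlt H₁ H₂ N b c (h :: t)) :
    PPAlt H₁ H₂ N b c ((n * h) :: t) := by
  have hmemN : n ∈ (bif b then H₁ else H₂) := by
    cases b
    · exact hle2 hn
    · exact hle1 hn
  cases w with
  | single _ _ hmem hnn =>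
      exact .single b (n * h) (mul_mem hmemN hmem)
        (fun hc => hnn (by simpa using mul_mem (inv_mem hn) hc))
  | cons _ _ _ _ hmem hnn tl =>
      exact .cons b c (n * h) t (mul_mem hmemN hmem)
        (fun hc => hnn (by simpa using mul_mem (inv_mem hn) hc)) tl


end PP

/-- (Ping Pong Lemma for amalgamated products.) If `G` acts on `X`, `H₁, H₂ ≤ G`,
`N = H₁ ∩ H₂` with `[H₁ : N] ≥ 3` and `[H₂ : N] ≥ 2`, and `X₁, X₂ ⊆ X` are nonempty
with `X₂ ⊄ X₁`, `(H₁ \ N)·X₂ ⊆ X₁` and `(H₂ \ N)·X₁ ⊆ X₂`, then the canonical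
homomorphism `H₁ *_N H₂ → G` is injective. (Index `0` means infinite index.) -/
theorem stmt_4 {G X : Type*} [Group G] [MulAction G X]
    (H₁ H₂ N : Subgroup G) (hN : N = H₁ ⊓ H₂)
    (hle1 : N ≤ H₁) (hle2 : N ≤ H₂)
    (hidx1 : N.relIndex H₁ = 0 ∨ 3 ≤ N.relIndex H₁)
    (hidx2 : N.relIndex H₂ = 0 ∨ 2 ≤ N.relIndex H₂)
    (X₁ X₂ : Set X) (h1 : X₁.Nonempty) (h2 : X₂.Nonempty) (hns : ¬ X₂ ⊆ X₁)
    (hp1 : ∀ h ∈ H₁, h ∉ N → ∀ x ∈ X₂, h • x ∈ X₁)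
    (hp2 : ∀ h ∈ H₂, h ∉ N → ∀ x ∈ X₁, h • x ∈ X₂) :
    Function.Injective
      (Monoid.PushoutI.lift (φ := pingMaps H₁ H₂ N hle1 hle2)
        (pingSub H₁ H₂) N.subtype (by intro b; cases b <;> rfl)) := by
  classical
  set f := Monoid.PushoutI.lift (φ := pingMaps H₁ H₂ N hle1 hle2) (pingSub H₁ H₂) N.subtype
      (by intro b; cases b <;> rfl) with hfdef
  have hφinj : ∀ b, Function.Injective (pingMaps H₁ H₂ N hle1 hle2 b) := by
    intro b
    cases b
    · exact Subgroup.inclusion_injective hle2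
    · exact Subgroup.inclusion_injective hle1
  obtain ⟨d⟩ := Monoid.PushoutI.NormalWord.transversal_nonempty (pingMaps H₁ H₂ N hle1 hle2) hφinj
  rw [injective_iff_map_eq_one]
  intro g hg
  obtain ⟨w, hprod⟩ : ∃ w : Monoid.PushoutI.NormalWord d, w.prod = g :=
    ⟨g • Monoid.PushoutI.NormalWord.empty, by
      rw [Monoid.PushoutI.NormalWord.prod_smul,
        Monoid.PushoutI.NormalWord.prod_empty, mul_one]⟩
  -- f applied to a word product
  set toG : (Σ b, pingFam H₁ H₂ b) → G := fun p => pingSub H₁ H₂ p.1 p.2 with htoG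
  have key : ∀ L : List (Σ b, pingFam H₁ H₂ b),
      f (Monoid.PushoutI.ofCoprodI (L.map fun l => Monoid.CoprodI.of l.2).prod)
        = (L.map toG).prod := by
    intro L
    induction L with
    | nil => simp
    | cons a t ih =>
        simp only [List.map_cons, List.prod_cons, map_mul, ih,
          Monoid.PushoutI.ofCoprodI_of]
        rw [hfdef, Monoid.PushoutI.lift_of]
  have hfg : (↑w.head : G) * ((w.toList.map toG).prod) = 1 := by
    rw [← hg, ← hprod, Monoid.PushoutI.NormalWord.prod, map_mul,
      Monoid.PushoutI.lift_base]
    congr 1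
    rw [Monoid.CoprodI.Word.prod]
    exact (key w.toList).symm
  -- letters are not in N
  have hletter : ∀ q ∈ w.toList, toG q ∉ N ∧ toG q ∈ (bif q.1 then H₁ else H₂) := by
    intro q hq
    have hset : q.2 ∈ d.set q.1 := w.normalized q.1 q.2 (by exact hq)
    have hne1 : q.2 ≠ 1 := w.ne_one q hq
    have hnr : q.2 ∉ (pingMaps H₁ H₂ N hle1 hle2 q.1).range := by
      intro hr
      apply hne1
      have := (d.compl q.1).1 (a₁ := (⟨⟨q.2, hr⟩, ⟨1, d.one_mem q.1⟩⟩ :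
          ((pingMaps H₁ H₂ N hle1 hle2 q.1).range × d.set q.1)))
        (a₂ := (⟨⟨1, one_mem _⟩, ⟨q.2, hset⟩⟩ : ((pingMaps H₁ H₂ N hle1 hle2 q.1).range × d.set q.1)))
        (by simp)
      have h2 := congrArg (fun p => (p.2 : pingFam H₁ H₂ q.1)) this
      simpa using h2.symm
    constructor
    · intro hmemN
      apply hnr
      rcases q with ⟨b, x⟩
      cases b
      · exact ⟨⟨((show ↥H₂ from x : ↥H₂) : G), hmemN⟩, rfl⟩
      · exact ⟨⟨((show ↥H₁ from x : ↥H₁) : G), hmemN⟩, rfl⟩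
    · rcases q with ⟨b, x⟩
      cases b
      · exact (show ↥H₂ from x).2
      · exact (show ↥H₁ from x).2
  -- build PPAlt from the word
  have hAlt : ∀ (t : List (Σ b, pingFam H₁ H₂ b)) (p : Σ b, pingFam H₁ H₂ b),
      (∀ q ∈ p :: t, toG q ∉ N ∧ toG q ∈ (bif q.1 then H₁ else H₂)) →
      (p :: t).Chain' (fun a b => a.1 ≠ b.1) →
      ∃ c, PPAlt H₁ H₂ N p.1 c ((p :: t).map toG) := by
    intro t
    induction t with
    | nil =>
        intro p hmem _
        exact ⟨p.1, .single _ _ (hmem p (by simp)).2 (hmem p (by simp)).1⟩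
    | cons q t ih =>
        intro p hmem hchain
        obtain ⟨c, hc⟩ := ih q (fun r hr => hmem r (List.mem_cons_of_mem _ hr))
          hchain.tail
        have hq : q.1 = !p.1 := by
          have h12 := (List.isChain_cons_cons.1 hchain).1
          exact Bool.eq_not.2 h12.symm
        rw [hq] at hc
        exact ⟨c, .cons _ _ _ _ (hmem p (by simp)).2 (hmem p (by simp)).1 hc⟩
  rcases hl : w.toList with _ | ⟨p, rest⟩
  · -- empty word: g = base w.head
    rw [hl] at hfg
    simp only [List.map_nil, List.prod_nil, mul_one] at hfg
    have hhead : w.head = 1 := by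
      ext; simpa using hfg
    rw [← hprod, Monoid.PushoutI.NormalWord.prod, hhead]
    have : w.toWord.prod = 1 := by
      rw [Monoid.CoprodI.Word.prod]
      rw [show w.toList = [] from hl]
      simp
    rw [this]
    simp
  · exfalso
    obtain ⟨c, hc⟩ := hAlt rest p (by rw [← hl]; exact hletter) (by
      rw [← hl]; exact w.chain_ne)
    have hc' : PPAlt H₁ H₂ N p.1 c (((↑w.head : G) * toG p) :: rest.map toG) := by
      exact PPAlt.head_mul hle1 hle2 w.head.2 (h := toG p) (t := rest.map toG)
        (by simpa using hc)
    apply pp_ne_one hidx1 hns hp1 hp2 hc'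
    rw [hl] at hfg
    simpa [List.map_cons, List.prod_cons, mul_assoc] using hfg
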